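/- Let p₁ > 0, p₂ ≠ 0, p₃ > 0 with p₁² + p₂² = p₃², and let Θ := arctan(p₁/(p₂+p₃)) ∈ (0, π/2). Let D, R, I : ℝ → ℝ be differentiable functions satisfying D' = 2I·(p₁D + (p₂-p₃)R), R' = 2I·(-(p₂+p₃)D + p₁R), I' = -2p₁(D² + R²) + 4p₃·D·R on ℝ. Set ρ := √(D(0)² + R(0)² + I(0)²), X := D(0)/(2 sin Θ) + R(0)/(2 cos Θ), Y := -D(0)/(2 sin Θ) + R(0)/(2 cos Θ), and assume |X| < ρ; set r := √(ρ² - X²). Then for all t ∈ ℝ, with E(t) := ((r - I(0))² + Y²)·e^{4p₁rt} + ((r + I(0))² + Y²)·e^{-4p₁rt} - 2I(0)² - 2Y² + 2r²: D(t) = sin Θ · ( X - 4r²Y/E(t) ), R(t) = cos Θ · ( X + 4r²Y/E(t) ), and I(t) = -r·( ((r - I(0))² + Y²)·e^{4p₁rt} - ((r + I(0))² + Y²)·e^{-4p₁rt} ) / E(t). -/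

import Mathlib

/-- Scalar Grönwall: a nonneg function with φ(0)=0 and |φ'| ≤ K·φ is identically 0. -/
lemma gronwall_zero' (φ g : ℝ → ℝ) (K : ℝ)
    (hφ : ∀ t, HasDerivAt φ (g t) t) (hpos : ∀ t, 0 ≤ φ t)
    (hbd : ∀ t, |g t| ≤ K * φ t) (h0 : φ 0 = 0) : ∀ t, φ t = 0 := by
  intro t
  rcases le_total 0 t with h | h
  · set h1 : ℝ → ℝ := fun u => φ u * Real.exp (-(K * u)) with hh1
    have hd : ∀ u, HasDerivAt h1 ((g u - K * φ u) * Real.exp (-(K * u))) u := by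
      intro u
      have he : HasDerivAt (fun u : ℝ => Real.exp (-(K * u))) (-K * Real.exp (-(K * u))) u := by
        have := (Real.hasDerivAt_exp (-(K * u))).comp u
          (((hasDerivAt_id u).const_mul K).neg)
        exact this.congr_deriv (by ring)
      have := (hφ u).mul he
      exact this.congr_deriv (by ring)
    have hanti : Antitone h1 := by
      apply antitone_of_deriv_nonpos
      · intro u; exact (hd u).differentiableAt
      · intro u
        rw [(hd u).deriv]
        apply mul_nonpos_of_nonpos_of_nonneg
        · have := (abs_le.mp (hbd u)).2; linarith
        · positivity
    have h1t : h1 t ≤ 0 := by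
      have := hanti h
      simpa [hh1, h0] using this
    have h1t' : φ t * Real.exp (-(K * t)) ≤ 0 := h1t
    have : φ t ≤ 0 := by
      have hexp : 0 < Real.exp (-(K * t)) := Real.exp_pos _
      nlinarith [h1t']
    linarith [hpos t]
  · set h1 : ℝ → ℝ := fun u => φ u * Real.exp (K * u) with hh1
    have hd : ∀ u, HasDerivAt h1 ((g u + K * φ u) * Real.exp (K * u)) u := by
      intro u
      have he : HasDerivAt (fun u : ℝ => Real.exp (K * u)) (K * Real.exp (K * u)) u := by
        have := (Real.hasDerivAt_exp (K * u)).comp u ((hasDerivAt_id u).const_mul K)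
        exact this.congr_deriv (by ring)
      have := (hφ u).mul he
      exact this.congr_deriv (by ring)
    have hmono : Monotone h1 := by
      apply monotone_of_deriv_nonneg
      · intro u; exact (hd u).differentiableAt
      · intro u
        rw [(hd u).deriv]
        apply mul_nonneg
        · have := (abs_le.mp (hbd u)).1; linarith
        · positivity
    have h1t : h1 t ≤ 0 := by
      have := hmono h
      simpa [hh1, h0] using this
    have h1t' : φ t * Real.exp (K * t) ≤ 0 := h1t
    have : φ t ≤ 0 := by
      have hexp : 0 < Real.exp (K * t) := Real.exp_pos _
      nlinarith [h1t']
    linarith [hpos t]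


lemma bnd (q Q w x y M : ℝ) (hq : |q| ≤ Q) (hw : |w| ≤ M) :
    |q * (w * (x * y))| ≤ Q * M * (x ^ 2 + y ^ 2) / 2 := by
  have hM : 0 ≤ M := le_trans (abs_nonneg w) hw
  have hQ : 0 ≤ Q := le_trans (abs_nonneg q) hq
  have h1 : |q * (w * (x * y))| = |q| * (|w| * (|x| * |y|)) := by
    rw [abs_mul, abs_mul, abs_mul]
  rw [h1]
  have hxy : |x| * |y| ≤ (x ^ 2 + y ^ 2) / 2 := by
    linarith [sq_nonneg (|x| - |y|), sq_abs x, sq_abs y]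
  have h2 : |w| * (|x| * |y|) ≤ M * ((x ^ 2 + y ^ 2) / 2) :=
    mul_le_mul hw hxy (by positivity) hM
  calc |q| * (|w| * (|x| * |y|)) ≤ Q * (M * ((x ^ 2 + y ^ 2) / 2)) :=
        mul_le_mul hq h2 (by positivity) hQ
    _ = Q * M * (x ^ 2 + y ^ 2) / 2 := by ring

set_option maxHeartbeats 1000000 in
lemma key_ineq (p₁ p₂ p₃ M d r i d' r' i' : ℝ) (hp₃ : 0 < p₃)
    (h1 : |p₁| ≤ p₃) (h2 : |p₂| ≤ p₃)
    (hd : |d| ≤ M) (hr : |r| ≤ M) (hi : |i| ≤ M)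
    (hd' : |d'| ≤ M) (hr' : |r'| ≤ M) (hi' : |i'| ≤ M) :
    |2 * (d - d') * (2 * i * (p₁ * d + (p₂ - p₃) * r) - 2 * i' * (p₁ * d' + (p₂ - p₃) * r'))
      + 2 * (r - r') * (2 * i * (-((p₂ + p₃) * d) + p₁ * r) - 2 * i' * (-((p₂ + p₃) * d') + p₁ * r'))
      + 2 * (i - i') * ((-(2 * p₁ * (d ^ 2 + r ^ 2)) + 4 * p₃ * d * r)
          - (-(2 * p₁ * (d' ^ 2 + r' ^ 2)) + 4 * p₃ * d' * r'))|
    ≤ 40 * p₃ * M * ((d - d') ^ 2 + (r - r') ^ 2 + (i - i') ^ 2) := by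
  have hM : 0 ≤ M := le_trans (abs_nonneg d) hd
  have h1' := abs_le.mp h1
  have h2' := abs_le.mp h2
  have T1 := bnd (4*(p₂-p₃)) (8*p₃) r (d-d') (i-i') M (by rw [abs_le]; constructor <;> nlinarith) hr
  have T2 := bnd (8*p₃) (8*p₃) r' (d-d') (i-i') M (by rw [abs_le]; constructor <;> nlinarith) hr'
  have T3 := bnd (-(4*p₁)) (4*p₃) d' (d-d') (i-i') M (by rw [abs_le]; constructor <;> nlinarith) hd'
  have T4 := bnd (4*(p₃-p₂)) (8*p₃) d (r-r') (i-i') M (by rw [abs_le]; constructor <;> nlinarith) hd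
  have T5 := bnd (-(4*p₁)) (4*p₃) r' (r-r') (i-i') M (by rw [abs_le]; constructor <;> nlinarith) hr'
  have T6 := bnd (-(8*p₃)) (8*p₃) i' (d-d') (r-r') M (by rw [abs_le]; constructor <;> nlinarith) hi'
  have T7 := bnd (4*p₁) (4*p₃) i' (d-d') (d-d') M (by rw [abs_le]; constructor <;> nlinarith) hi'
  have T8 := bnd (4*p₁) (4*p₃) i' (r-r') (r-r') M (by rw [abs_le]; constructor <;> nlinarith) hi'
  have hg : 2 * (d - d') * (2 * i * (p₁ * d + (p₂ - p₃) * r) - 2 * i' * (p₁ * d' + (p₂ - p₃) * r'))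
      + 2 * (r - r') * (2 * i * (-((p₂ + p₃) * d) + p₁ * r) - 2 * i' * (-((p₂ + p₃) * d') + p₁ * r'))
      + 2 * (i - i') * ((-(2 * p₁ * (d ^ 2 + r ^ 2)) + 4 * p₃ * d * r)
          - (-(2 * p₁ * (d' ^ 2 + r' ^ 2)) + 4 * p₃ * d' * r'))
      = 4*(p₂-p₃) * (r * ((d-d') * (i-i'))) + 8*p₃ * (r' * ((d-d') * (i-i')))
        + (-(4*p₁)) * (d' * ((d-d') * (i-i'))) + 4*(p₃-p₂) * (d * ((r-r') * (i-i')))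
        + (-(4*p₁)) * (r' * ((r-r') * (i-i'))) + (-(8*p₃)) * (i' * ((d-d') * (r-r')))
        + 4*p₁ * (i' * ((d-d') * (d-d'))) + 4*p₁ * (i' * ((r-r') * (r-r'))) := by ring
  rw [abs_le]
  constructor
  · linarith [abs_le.mp T1, abs_le.mp T2, abs_le.mp T3, abs_le.mp T4, abs_le.mp T5,
      abs_le.mp T6, abs_le.mp T7, abs_le.mp T8, hg, mul_nonneg (mul_nonneg hp₃.le hM) (sq_nonneg (d-d')),
      mul_nonneg (mul_nonneg hp₃.le hM) (sq_nonneg (r-r')), mul_nonneg (mul_nonneg hp₃.le hM) (sq_nonneg (i-i'))]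
  · linarith [abs_le.mp T1, abs_le.mp T2, abs_le.mp T3, abs_le.mp T4, abs_le.mp T5,
      abs_le.mp T6, abs_le.mp T7, abs_le.mp T8, hg, mul_nonneg (mul_nonneg hp₃.le hM) (sq_nonneg (d-d')),
      mul_nonneg (mul_nonneg hp₃.le hM) (sq_nonneg (r-r')), mul_nonneg (mul_nonneg hp₃.le hM) (sq_nonneg (i-i'))]


lemma quad_conserved (p₁ p₂ p₃ : ℝ) (D R I : ℝ → ℝ)
    (hD : ∀ t, HasDerivAt D (2 * I t * (p₁ * D t + (p₂ - p₃) * R t)) t)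
    (hR : ∀ t, HasDerivAt R (2 * I t * (-((p₂ + p₃) * D t) + p₁ * R t)) t)
    (hI : ∀ t, HasDerivAt I (-(2 * p₁ * (D t ^ 2 + R t ^ 2)) + 4 * p₃ * D t * R t) t) :
    ∀ t, D t ^ 2 + R t ^ 2 + I t ^ 2 = D 0 ^ 2 + R 0 ^ 2 + I 0 ^ 2 := by
  have key : ∀ t, HasDerivAt (fun t => D t ^ 2 + R t ^ 2 + I t ^ 2) 0 t := by
    intro t
    have h := (((hD t).mul (hD t)).add ((hR t).mul (hR t))).add ((hI t).mul (hI t))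
    have h2 : HasDerivAt (fun t => D t * D t + R t * R t + I t * I t) 0 t := by
      exact h.congr_deriv (by ring)
    have h3 : (fun t => D t ^ 2 + R t ^ 2 + I t ^ 2)
        = fun t => D t * D t + R t * R t + I t * I t := by
      funext u; ring
    rw [h3]; exact h2
  intro t
  have := is_const_of_deriv_eq_zero (f := fun t => D t ^ 2 + R t ^ 2 + I t ^ 2)
    (fun u => (key u).differentiableAt) (fun u => (key u).deriv) t 0
  simpa using this


lemma alg_D (s c p₁ p₂ p₃ r X Y e f : ℝ) (he : e ≠ 0)
    (hid2 : p₁ * s = (p₃ - p₂) * c) :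
    2 * (-(r * f) / e) * (p₁ * (s * (X - 4 * r ^ 2 * Y / e)) + (p₂ - p₃) * (c * (X + 4 * r ^ 2 * Y / e)))
      = s * -((0 * e - 4 * r ^ 2 * Y * (4 * p₁ * r * f)) / e ^ 2) := by
  linear_combination (2 * (-(r * f) / e) * (X + 4 * r ^ 2 * Y / e)) * hid2

lemma alg_R (s c p₁ p₂ p₃ r X Y e f : ℝ) (he : e ≠ 0)
    (hid1 : p₁ * c = (p₂ + p₃) * s) :
    2 * (-(r * f) / e) * (-((p₂ + p₃) * (s * (X - 4 * r ^ 2 * Y / e))) + p₁ * (c * (X + 4 * r ^ 2 * Y / e)))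
      = c * ((0 * e - 4 * r ^ 2 * Y * (4 * p₁ * r * f)) / e ^ 2) := by
  linear_combination (2 * (-(r * f) / e) * (X - 4 * r ^ 2 * Y / e)) * hid1

lemma alg_I (s c p₁ p₂ p₃ r X Y e f Cc : ℝ) (he : e ≠ 0) (hp₃ : p₃ ≠ 0)
    (hs2 : 2 * p₃ * s ^ 2 = p₃ - p₂) (hc2 : 2 * p₃ * c ^ 2 = p₃ + p₂)
    (hsc : 2 * p₃ * (s * c) = p₁)
    (hCY : p₃ * Cc = 4 * p₂ * (X * Y))
    (hEF : e ^ 2 - f ^ 2 = 2 * Cc * e + 16 * r ^ 2 * Y ^ 2) :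
    -(2 * p₁ * ((s * (X - 4 * r ^ 2 * Y / e)) ^ 2 + (c * (X + 4 * r ^ 2 * Y / e)) ^ 2))
        + 4 * p₃ * (s * (X - 4 * r ^ 2 * Y / e)) * (c * (X + 4 * r ^ 2 * Y / e))
      = (-(r * (4 * p₁ * r * (e - Cc))) * e - -(r * f) * (4 * p₁ * r * f)) / e ^ 2 := by
  apply mul_left_cancel₀ (show (2 * p₃ : ℝ) ≠ 0 by simpa using hp₃)
  have hw : e * e⁻¹ = 1 := mul_inv_cancel₀ he
  linear_combination
    (-(2*p₁) * (X - 4*r^2*Y/e)^2) * hs2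
    + (-(2*p₁) * (X + 4*r^2*Y/e)^2) * hc2
    + (4*p₃ * ((X - 4*r^2*Y/e) * (X + 4*r^2*Y/e))) * hsc
    + (8*p₁*p₃*r^2/e^2) * hEF
    + (8*p₁*r^2/e) * hCY
    + (8*p₁*p₃*r^2*Cc/e) * hw


set_option maxHeartbeats 4000000 in
theorem stmt_12 (p₁ p₂ p₃ : ℝ) (hp₁ : 0 < p₁) (hp₂ : p₂ ≠ 0) (hp₃ : 0 < p₃)
    (hpyth : p₁ ^ 2 + p₂ ^ 2 = p₃ ^ 2)
    (Θ : ℝ) (hΘ : Θ = Real.arctan (p₁ / (p₂ + p₃)))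
    (D R I : ℝ → ℝ)
    (hD : ∀ t, HasDerivAt D (2 * I t * (p₁ * D t + (p₂ - p₃) * R t)) t)
    (hR : ∀ t, HasDerivAt R (2 * I t * (-((p₂ + p₃) * D t) + p₁ * R t)) t)
    (hI : ∀ t, HasDerivAt I (-(2 * p₁ * (D t ^ 2 + R t ^ 2)) + 4 * p₃ * D t * R t) t)
    (ρ X Y r : ℝ)
    (hρ : ρ = Real.sqrt (D 0 ^ 2 + R 0 ^ 2 + I 0 ^ 2))
    (hX : X = D 0 / (2 * Real.sin Θ) + R 0 / (2 * Real.cos Θ))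
    (hY : Y = -(D 0 / (2 * Real.sin Θ)) + R 0 / (2 * Real.cos Θ))
    (hXρ : |X| < ρ)
    (hr : r = Real.sqrt (ρ ^ 2 - X ^ 2))
    (E : ℝ → ℝ)
    (hE : ∀ t, E t = ((r - I 0) ^ 2 + Y ^ 2) * Real.exp (4 * p₁ * r * t)
                      + ((r + I 0) ^ 2 + Y ^ 2) * Real.exp (-(4 * p₁ * r * t))
                      - 2 * I 0 ^ 2 - 2 * Y ^ 2 + 2 * r ^ 2) :
    ∀ t : ℝ,
      D t = Real.sin Θ * (X - 4 * r ^ 2 * Y / E t) ∧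
      R t = Real.cos Θ * (X + 4 * r ^ 2 * Y / E t) ∧
      I t = -(r * (((r - I 0) ^ 2 + Y ^ 2) * Real.exp (4 * p₁ * r * t)
                    - ((r + I 0) ^ 2 + Y ^ 2) * Real.exp (-(4 * p₁ * r * t)))) / E t := by
  -- basic positivity facts
  have hp2abs : |p₂| < p₃ := by
    have h1 : p₂ ^ 2 < p₃ ^ 2 := by
      have := pow_pos hp₁ 2
      linarith only [hpyth, this]
    have h2 : |p₂| ^ 2 < p₃ ^ 2 := by rwa [sq_abs]
    exact lt_of_pow_lt_pow_left₀ 2 hp₃.le h2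
  have hp23 : 0 < p₂ + p₃ := by have := (abs_lt.mp hp2abs).1; linarith
  have hp32 : 0 < p₃ - p₂ := by have := (abs_lt.mp hp2abs).2; linarith
  -- trig identities
  have hc : 0 < Real.cos Θ := by rw [hΘ]; exact Real.cos_arctan_pos _
  have htan : Real.tan Θ = p₁ / (p₂ + p₃) := by rw [hΘ, Real.tan_arctan]
  have hid1 : p₁ * Real.cos Θ = (p₂ + p₃) * Real.sin Θ := by
    have h := Real.tan_eq_sin_div_cos Θ
    rw [htan] at h
    field_simp at h
    linarith [h]
  have hs : 0 < Real.sin Θ := by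
    by_contra hns
    push_neg at hns
    have h1 : (p₂ + p₃) * Real.sin Θ ≤ 0 := mul_nonpos_of_nonneg_of_nonpos hp23.le hns
    have h2 : 0 < p₁ * Real.cos Θ := mul_pos hp₁ hc
    linarith only [h1, h2, hid1]
  have hsc1 : Real.sin Θ ^ 2 + Real.cos Θ ^ 2 = 1 := Real.sin_sq_add_cos_sq Θ
  have hid2 : p₁ * Real.sin Θ = (p₃ - p₂) * Real.cos Θ := by
    have h : (p₂ + p₃) * (p₁ * Real.sin Θ) = (p₂ + p₃) * ((p₃ - p₂) * Real.cos Θ) := by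
      linear_combination (-p₁ : ℝ) * hid1 + Real.cos Θ * hpyth
    exact mul_left_cancel₀ (ne_of_gt hp23) h
  have hs2 : 2 * p₃ * Real.sin Θ ^ 2 = p₃ - p₂ := by
    linear_combination (-Real.sin Θ) * hid1 + Real.cos Θ * hid2 + (p₃ - p₂) * hsc1
  have hc2 : 2 * p₃ * Real.cos Θ ^ 2 = p₃ + p₂ := by
    linear_combination (2 * p₃) * hsc1 - hs2
  have hsc : 2 * p₃ * (Real.sin Θ * Real.cos Θ) = p₁ := by
    have h : p₁ * (2 * p₃ * (Real.sin Θ * Real.cos Θ)) = p₁ * p₁ := by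
      linear_combination (2 * p₃ * Real.cos Θ) * hid2 + (p₃ - p₂) * hc2 - hpyth
    exact mul_left_cancel₀ (ne_of_gt hp₁) h
  -- ρ, r
  have hsum0 : (0:ℝ) ≤ D 0 ^ 2 + R 0 ^ 2 + I 0 ^ 2 := by positivity
  have hρ2 : ρ ^ 2 = D 0 ^ 2 + R 0 ^ 2 + I 0 ^ 2 := by rw [hρ]; exact Real.sq_sqrt hsum0
  have hρ0 : 0 ≤ ρ := hρ ▸ Real.sqrt_nonneg _
  have hX2 : X ^ 2 < ρ ^ 2 := by
    calc X ^ 2 = |X| ^ 2 := (sq_abs X).symm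
      _ < ρ ^ 2 := by exact pow_lt_pow_left₀ hXρ (abs_nonneg X) (by norm_num)
  have hr2 : r ^ 2 = ρ ^ 2 - X ^ 2 := by rw [hr]; exact Real.sq_sqrt (by linarith)
  have hrpos : 0 < r := by rw [hr]; exact Real.sqrt_pos.mpr (by linarith)
  -- initial data
  have hD0 : D 0 = Real.sin Θ * (X - Y) := by
    rw [hX, hY]; field_simp; ring
  have hR0 : R 0 = Real.cos Θ * (X + Y) := by
    rw [hX, hY]; field_simp; ring
  have e1 : 2 * p₃ * (D 0 ^ 2 + R 0 ^ 2) = 2 * p₃ * (X ^ 2 + Y ^ 2) + 4 * p₂ * (X * Y) := by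
    rw [hD0, hR0]
    linear_combination ((X - Y) ^ 2) * hs2 + ((X + Y) ^ 2) * hc2
  have hkey : 2 * p₂ * (X * Y) = p₃ * (r ^ 2 - Y ^ 2 - I 0 ^ 2) := by
    linear_combination -e1 / 2 - p₃ * hr2 - p₃ * hρ2
  -- abbreviations
  set A : ℝ := (r - I 0) ^ 2 + Y ^ 2 with hA
  set B : ℝ := (r + I 0) ^ 2 + Y ^ 2 with hB
  set Cc : ℝ := 2 * r ^ 2 - 2 * I 0 ^ 2 - 2 * Y ^ 2 with hCc
  have hEt : ∀ t, E t = A * Real.exp (4 * p₁ * r * t) + B * Real.exp (-(4 * p₁ * r * t)) + Cc := by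
    intro t; rw [hE t]; ring
  have hAB : 4 * A * B - Cc ^ 2 = 16 * Y ^ 2 * r ^ 2 := by rw [hA, hB, hCc]; ring
  -- positivity of E
  have hEpos : ∀ t, 0 < E t := by
    intro t
    rw [hEt t]
    set u := Real.exp (4 * p₁ * r * t) with hu
    have hupos : 0 < u := Real.exp_pos _
    have hun : Real.exp (-(4 * p₁ * r * t)) = u⁻¹ := by rw [Real.exp_neg]
    have hu1 : u * u⁻¹ = 1 := mul_inv_cancel₀ hupos.ne'
    rw [hun]
    rcases eq_or_ne Y 0 with hY0 | hY0
    · -- then r² = I0²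
      have hrI : r ^ 2 = I 0 ^ 2 := by
        have h := hkey; rw [hY0] at h
        have h2 : p₃ * (r ^ 2 - I 0 ^ 2) = 0 := by linear_combination -h
        have h3 := (mul_eq_zero.mp h2).resolve_left hp₃.ne'
        linarith only [h3]
      have hfact : (I 0 - r) * (I 0 + r) = 0 := by linear_combination -hrI
      rcases mul_eq_zero.mp hfact with h | h
      · -- I 0 = r
        have h' : I 0 = r := by linarith [sub_eq_zero.mp h]
        have hAz : A = 0 := by rw [hA, hY0, h']; ring
        have hBz : B = 4 * r ^ 2 := by rw [hB, hY0, h']; ring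
        have hCz : Cc = 0 := by rw [hCc, hY0, h']; ring
        rw [hAz, hBz, hCz]
        have : 0 < 4 * r ^ 2 * u⁻¹ := by positivity
        linarith
      · -- I 0 = -r
        have h' : I 0 = -r := by linarith [add_eq_zero_iff_eq_neg.mp h]
        have hAz : A = 4 * r ^ 2 := by rw [hA, hY0, h']; ring
        have hBz : B = 0 := by rw [hB, hY0, h']; ring
        have hCz : Cc = 0 := by rw [hCc, hY0, h']; ring
        rw [hAz, hBz, hCz]
        have : 0 < 4 * r ^ 2 * u := by positivity
        linarith
    · have hY2 : 0 < Y ^ 2 := by positivity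
      have hApos : 0 < A := by
        rw [hA]; have h := sq_nonneg (r - I 0); linarith only [h, hY2]
      have hYr : 0 < 16 * Y ^ 2 * r ^ 2 := by positivity
      have hiden : 4 * (A * u) * (A * u + B * u⁻¹ + Cc)
          = (2 * A * u + Cc) ^ 2 + 16 * Y ^ 2 * r ^ 2 := by
        linear_combination (4 * A * B) * hu1 + hAB
      have h4 : 0 < 4 * (A * u) := by positivity
      have h5 : 0 < (2 * A * u + Cc) ^ 2 + 16 * Y ^ 2 * r ^ 2 := by
        have := sq_nonneg (2 * A * u + Cc); linarith
      have h6 : A * u + B * u⁻¹ + Cc = ((2 * A * u + Cc) ^ 2 + 16 * Y ^ 2 * r ^ 2) / (4 * (A * u)) := by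
        rw [eq_div_iff h4.ne']
        linear_combination hiden
      rw [h6]
      exact div_pos h5 h4
  have hEne : ∀ t, E t ≠ 0 := fun t => (hEpos t).ne'
  -- F and derivatives
  set F : ℝ → ℝ := fun t => A * Real.exp (4 * p₁ * r * t) - B * Real.exp (-(4 * p₁ * r * t)) with hF
  have hexp' : ∀ t : ℝ, HasDerivAt (fun t : ℝ => Real.exp (4 * p₁ * r * t))
      ((4 * p₁ * r) * Real.exp (4 * p₁ * r * t)) t := by
    intro t
    have hlin : HasDerivAt (fun t : ℝ => 4 * p₁ * r * t) (4 * p₁ * r) t := by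
      simpa using (hasDerivAt_id t).const_mul (4 * p₁ * r)
    have h := hlin.exp
    convert h using 1
    ring
  have hexpn' : ∀ t : ℝ, HasDerivAt (fun t : ℝ => Real.exp (-(4 * p₁ * r * t)))
      (-(4 * p₁ * r) * Real.exp (-(4 * p₁ * r * t))) t := by
    intro t
    have hlin : HasDerivAt (fun t : ℝ => -(4 * p₁ * r * t)) (-(4 * p₁ * r)) t := by
      have : HasDerivAt (fun t : ℝ => 4 * p₁ * r * t) (4 * p₁ * r) t := by
        simpa using (hasDerivAt_id t).const_mul (4 * p₁ * r)
      exact this.neg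
    have h := hlin.exp
    convert h using 1
    ring
  have hEfun : E = fun t => A * Real.exp (4 * p₁ * r * t) + B * Real.exp (-(4 * p₁ * r * t)) + Cc :=
    funext hEt
  have hE' : ∀ t, HasDerivAt E ((4 * p₁ * r) * F t) t := by
    intro t
    rw [hEfun]
    have h := (((hexp' t).const_mul A).add ((hexpn' t).const_mul B)).add_const Cc
    exact h.congr_deriv (by rw [hF]; ring)
  have hF' : ∀ t, HasDerivAt F ((4 * p₁ * r) * (E t - Cc)) t := by
    intro t
    have h := ((hexp' t).const_mul A).sub ((hexpn' t).const_mul B)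
    rw [hF]
    exact h.congr_deriv (by rw [hEt t]; ring)
  have hexpmul : ∀ t : ℝ, Real.exp (4 * p₁ * r * t) * Real.exp (-(4 * p₁ * r * t)) = 1 := by
    intro t; rw [← Real.exp_add]; norm_num
  have hE2F2 : ∀ t, E t ^ 2 - F t ^ 2 = 2 * Cc * E t + 16 * r ^ 2 * Y ^ 2 := by
    intro t
    rw [hEt t, hF]
    linear_combination (4 * A * B) * hexpmul t + hAB
  -- candidate functions
  set Dc : ℝ → ℝ := fun t => Real.sin Θ * (X - 4 * r ^ 2 * Y / E t) with hDcdef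
  set Rc : ℝ → ℝ := fun t => Real.cos Θ * (X + 4 * r ^ 2 * Y / E t) with hRcdef
  set Ic : ℝ → ℝ := fun t => -(r * F t) / E t with hIcdef
  have hV' : ∀ t, HasDerivAt (fun t => 4 * r ^ 2 * Y / E t)
      ((0 * E t - 4 * r ^ 2 * Y * ((4 * p₁ * r) * F t)) / E t ^ 2) t := by
    intro t
    exact (hasDerivAt_const t (4 * r ^ 2 * Y)).div (hE' t) (hEne t)
  have hCY : p₃ * Cc = 4 * p₂ * (X * Y) := by
    rw [hCc]; linear_combination (-2 : ℝ) * hkey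
  have hDc' : ∀ t, HasDerivAt Dc (2 * Ic t * (p₁ * Dc t + (p₂ - p₃) * Rc t)) t := by
    intro t
    rw [hDcdef, hIcdef, hRcdef]
    have h := ((hV' t).const_sub X).const_mul (Real.sin Θ)
    exact h.congr_deriv (alg_D (Real.sin Θ) (Real.cos Θ) p₁ p₂ p₃ r X Y (E t) (F t) (hEne t) hid2).symm
  have hRc' : ∀ t, HasDerivAt Rc (2 * Ic t * (-((p₂ + p₃) * Dc t) + p₁ * Rc t)) t := by
    intro t
    rw [hDcdef, hIcdef, hRcdef]
    have h := ((hV' t).const_add X).const_mul (Real.cos Θ)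
    exact h.congr_deriv (alg_R (Real.sin Θ) (Real.cos Θ) p₁ p₂ p₃ r X Y (E t) (F t) (hEne t) hid1).symm
  have hIc' : ∀ t, HasDerivAt Ic (-(2 * p₁ * (Dc t ^ 2 + Rc t ^ 2)) + 4 * p₃ * Dc t * Rc t) t := by
    intro t
    rw [hDcdef, hIcdef, hRcdef]
    have h := (((hF' t).const_mul r).neg).div (hE' t) (hEne t)
    exact h.congr_deriv (alg_I (Real.sin Θ) (Real.cos Θ) p₁ p₂ p₃ r X Y (E t) (F t) Cc (hEne t) hp₃.ne'
      hs2 hc2 hsc hCY (hE2F2 t)).symm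
  -- initial values
  have hE0 : E 0 = 4 * r ^ 2 := by
    have h0 : 4 * p₁ * r * (0:ℝ) = 0 := by ring
    rw [hEt 0, h0]
    simp only [neg_zero, Real.exp_zero, mul_one]
    rw [hA, hB, hCc]; ring
  have hr2ne : (4 * r ^ 2 : ℝ) ≠ 0 := by positivity
  have hdivY : 4 * r ^ 2 * Y / (4 * r ^ 2) = Y := by
    field_simp
  have hDc0 : Dc 0 = D 0 := by
    rw [hDcdef]; simp only []
    rw [hE0, hD0, hdivY]
  have hRc0 : Rc 0 = R 0 := by
    rw [hRcdef]; simp only []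
    rw [hE0, hR0, hdivY]
  have hF0 : F 0 = -(4 * r * I 0) := by
    have h0 : 4 * p₁ * r * (0:ℝ) = 0 := by ring
    rw [hF]; simp only []
    rw [h0]
    simp only [neg_zero, Real.exp_zero, mul_one]
    rw [hA, hB]; ring
  have hIc0 : Ic 0 = I 0 := by
    rw [hIcdef]; simp only []
    rw [hE0, hF0]
    field_simp
  -- conservation / bounds
  have hconsD := quad_conserved p₁ p₂ p₃ D R I hD hR hI
  have hconsC := quad_conserved p₁ p₂ p₃ Dc Rc Ic hDc' hRc' hIc'
  have hsumD : ∀ t, D t ^ 2 + R t ^ 2 + I t ^ 2 = ρ ^ 2 := fun t => (hconsD t).trans hρ2.symm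
  have hsumC : ∀ t, Dc t ^ 2 + Rc t ^ 2 + Ic t ^ 2 = ρ ^ 2 := by
    intro t
    have h := hconsC t
    rw [hDc0, hRc0, hIc0] at h
    exact h.trans hρ2.symm
  have habs : ∀ x y z : ℝ, x ^ 2 + y ^ 2 + z ^ 2 = ρ ^ 2 → |x| ≤ ρ := by
    intro x y z h
    have hx2 : x ^ 2 ≤ ρ ^ 2 := by
      have hy := sq_nonneg y
      have hz := sq_nonneg z
      linarith only [h, hy, hz]
    calc |x| = Real.sqrt (x ^ 2) := (Real.sqrt_sq_eq_abs x).symm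
      _ ≤ Real.sqrt (ρ ^ 2) := Real.sqrt_le_sqrt hx2
      _ = ρ := Real.sqrt_sq hρ0
  have hp1le : |p₁| ≤ p₃ := by
    rw [abs_of_pos hp₁]
    have h1 : p₁ ^ 2 ≤ p₃ ^ 2 := by
      have := sq_nonneg p₂
      linarith only [hpyth, this]
    exact le_of_pow_le_pow_left₀ (by norm_num) hp₃.le h1
  -- difference function and Gronwall
  set φ : ℝ → ℝ := fun t => (D t - Dc t) ^ 2 + (R t - Rc t) ^ 2 + (I t - Ic t) ^ 2 with hφdef
  set g : ℝ → ℝ := fun t =>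
    2 * (D t - Dc t) * (2 * I t * (p₁ * D t + (p₂ - p₃) * R t)
        - 2 * Ic t * (p₁ * Dc t + (p₂ - p₃) * Rc t))
    + 2 * (R t - Rc t) * (2 * I t * (-((p₂ + p₃) * D t) + p₁ * R t)
        - 2 * Ic t * (-((p₂ + p₃) * Dc t) + p₁ * Rc t))
    + 2 * (I t - Ic t) * ((-(2 * p₁ * (D t ^ 2 + R t ^ 2)) + 4 * p₃ * D t * R t)
        - (-(2 * p₁ * (Dc t ^ 2 + Rc t ^ 2)) + 4 * p₃ * Dc t * Rc t)) with hgdef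
  have hφ' : ∀ t, HasDerivAt φ (g t) t := by
    intro t
    have h := ((((hD t).sub (hDc' t)).pow 2).add (((hR t).sub (hRc' t)).pow 2)).add
      (((hI t).sub (hIc' t)).pow 2)
    rw [hφdef, hgdef]
    exact h.congr_deriv (by push_cast [Pi.sub_apply]; ring)
  have hbd : ∀ t, |g t| ≤ 40 * p₃ * ρ * φ t := by
    intro t
    rw [hgdef, hφdef]; simp only []
    exact key_ineq p₁ p₂ p₃ ρ (D t) (R t) (I t) (Dc t) (Rc t) (Ic t) hp₃ hp1le hp2abs.le
      (habs _ _ _ (hsumD t)) (habs _ _ _ (by linarith [hsumD t] : R t ^ 2 + D t ^ 2 + I t ^ 2 = ρ ^ 2))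
      (habs _ _ _ (by linarith [hsumD t] : I t ^ 2 + D t ^ 2 + R t ^ 2 = ρ ^ 2))
      (habs _ _ _ (hsumC t)) (habs _ _ _ (by linarith [hsumC t] : Rc t ^ 2 + Dc t ^ 2 + Ic t ^ 2 = ρ ^ 2))
      (habs _ _ _ (by linarith [hsumC t] : Ic t ^ 2 + Dc t ^ 2 + Rc t ^ 2 = ρ ^ 2))
  have hφ0 : φ 0 = 0 := by
    rw [hφdef]; simp only []
    rw [hDc0, hRc0, hIc0]; ring
  have hφpos : ∀ t, 0 ≤ φ t := by
    intro t; rw [hφdef]; positivity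
  have hzero := gronwall_zero' φ g (40 * p₃ * ρ) hφ' hφpos hbd hφ0
  -- conclude
  intro t
  have hz := hzero t
  rw [hφdef] at hz; simp only [] at hz
  have e1 : D t = Dc t := by
    have h3 : (D t - Dc t) ^ 2 = 0 := le_antisymm
      (by linarith only [hz, sq_nonneg (R t - Rc t), sq_nonneg (I t - Ic t)]) (sq_nonneg _)
    have h4 := (pow_eq_zero_iff two_ne_zero).mp h3
    linarith only [h4]
  have e2 : R t = Rc t := by
    have h3 : (R t - Rc t) ^ 2 = 0 := le_antisymm
      (by linarith only [hz, sq_nonneg (D t - Dc t), sq_nonneg (I t - Ic t)]) (sq_nonneg _)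
    have h4 := (pow_eq_zero_iff two_ne_zero).mp h3
    linarith only [h4]
  have e3 : I t = Ic t := by
    have h3 : (I t - Ic t) ^ 2 = 0 := le_antisymm
      (by linarith only [hz, sq_nonneg (D t - Dc t), sq_nonneg (R t - Rc t)]) (sq_nonneg _)
    have h4 := (pow_eq_zero_iff two_ne_zero).mp h3
    linarith only [h4]
  refine ⟨?_, ?_, ?_⟩
  · rw [e1, hDcdef]
  · rw [e2, hRcdef]
  · rw [e3, hIcdef, hF]
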